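/- Let A be an invertible real p×p matrix such that P A Pᵀ is lower triangular for some permutation matrix P, and let L be a lower triangular matrix with strictly positive diagonal entries satisfying L Lᵀ = A Aᵀ. Fix an index j. If (i) A_{kj} = 0 for all k < j, and (ii) (A⁻¹)_{jk} = 0 for all k > j, then the j-th column of L⁻¹ A has exactly one nonzero entry, located in position j; indeed (L⁻¹ A)_{jj} = (L⁻¹)_{jj} · A_{jj} ≠ 0 and (L⁻¹ A)_{ij} = 0 for every i ≠ j. -/
import Mathlib


open Matrix

/-- Sufficiency part of Lemma D.2 ('OneNoneZeroWRTA') of the paper.  `A` is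
invertible and becomes lower triangular after permuting rows and columns by
`σ`; `L` is the lower triangular Cholesky factor (with positive diagonal) of
`A Aᵀ`.  If `A k j = 0` for all `k < j` and `(A⁻¹) j k = 0` for all `k > j`,
then the `j`-th column of `L⁻¹ A` has exactly one nonzero entry, located at
position `j`, and `(L⁻¹ A) j j = (L⁻¹) j j * A j j`. -/
theorem column_one_sparse_of_conditions
    {p : ℕ} (A L : Matrix (Fin p) (Fin p) ℝ)
    (hA : IsUnit A)
    (σ : Equiv.Perm (Fin p))
    (htri : ∀ i j : Fin p, i < j → A (σ i) (σ j) = 0)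
    (hLtri : ∀ i j : Fin p, i < j → L i j = 0)
    (hLdiag : ∀ i : Fin p, 0 < L i i)
    (hLL : L * Lᵀ = A * Aᵀ)
    (j : Fin p)
    (h1 : ∀ k : Fin p, k < j → A k j = 0)
    (h2 : ∀ k : Fin p, j < k → A⁻¹ j k = 0) :
    (L⁻¹ * A) j j = L⁻¹ j j * A j j ∧
      (L⁻¹ * A) j j ≠ 0 ∧
      ∀ i : Fin p, i ≠ j → (L⁻¹ * A) i j = 0 := by
  -- L is block triangular (w.r.t. the dual order)
  have hLbt : L.BlockTriangular OrderDual.toDual := by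
    intro i k h
    exact hLtri i k h
  have hLdet : L.det ≠ 0 := by
    rw [Matrix.det_of_lowerTriangular L hLbt]
    exact ne_of_gt (Finset.prod_pos fun i _ => hLdiag i)
  have hLunit : IsUnit L := (Matrix.isUnit_iff_isUnit_det L).2 (isUnit_iff_ne_zero.2 hLdet)
  haveI : Invertible L := hLunit.invertible
  have hLinv : L⁻¹.BlockTriangular OrderDual.toDual :=
    Matrix.blockTriangular_inv_of_blockTriangular hLbt
  have hLinvTri : ∀ i k : Fin p, i < k → L⁻¹ i k = 0 := fun i k h => hLinv h
  -- the key orthogonality: (L⁻¹ A) (L⁻¹ A)ᵀ = 1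
  have hLLinv : L * L⁻¹ = 1 := Matrix.mul_nonsing_inv L (isUnit_iff_ne_zero.2 hLdet)
  have hLinvL : L⁻¹ * L = 1 := Matrix.nonsing_inv_mul L (isUnit_iff_ne_zero.2 hLdet)
  have hAinv : A * A⁻¹ = 1 := Matrix.mul_nonsing_inv A ((Matrix.isUnit_iff_isUnit_det A).1 hA)
  have hAinv' : A⁻¹ * A = 1 := Matrix.nonsing_inv_mul A ((Matrix.isUnit_iff_isUnit_det A).1 hA)
  have hQorth : (L⁻¹ * A) * (L⁻¹ * A)ᵀ = 1 := by
    rw [Matrix.transpose_mul, Matrix.transpose_nonsing_inv]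
    calc L⁻¹ * A * (Aᵀ * Lᵀ⁻¹) = L⁻¹ * (A * Aᵀ) * Lᵀ⁻¹ := by noncomm_ring
      _ = L⁻¹ * (L * Lᵀ) * Lᵀ⁻¹ := by rw [hLL]
      _ = (L⁻¹ * L) * (Lᵀ * Lᵀ⁻¹) := by noncomm_ring
      _ = 1 := by
          rw [hLinvL, Matrix.mul_nonsing_inv, Matrix.one_mul]
          rw [Matrix.det_transpose]
          exact (Matrix.isUnit_iff_isUnit_det L).1 hLunit
  -- the inverse of Q is A⁻¹ L, hence Qᵀ = A⁻¹ L
  have hQinv : (L⁻¹ * A) * (A⁻¹ * L) = 1 := by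
    calc (L⁻¹ * A) * (A⁻¹ * L) = L⁻¹ * (A * A⁻¹) * L := by noncomm_ring
      _ = 1 := by rw [hAinv, Matrix.mul_one, hLinvL]
  have hQT : (L⁻¹ * A)ᵀ = A⁻¹ * L := by
    have h1' : (L⁻¹ * A)ᵀ * ((L⁻¹ * A) * (A⁻¹ * L)) = (L⁻¹ * A)ᵀ := by
      rw [hQinv, Matrix.mul_one]
    calc (L⁻¹ * A)ᵀ = (L⁻¹ * A)ᵀ * (L⁻¹ * A) * (A⁻¹ * L) := by
          rw [Matrix.mul_assoc, hQinv, Matrix.mul_one]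
      _ = A⁻¹ * L := by
          rw [mul_eq_one_comm.1 hQorth, Matrix.one_mul]
  -- third conjunct: off-diagonal entries of column j vanish
  have hzero : ∀ i : Fin p, i ≠ j → (L⁻¹ * A) i j = 0 := by
    intro i hij
    rcases lt_or_gt_of_ne hij with hlt | hgt
    · -- i < j : use triangularity of L⁻¹ and h1
      rw [Matrix.mul_apply]
      apply Finset.sum_eq_zero
      intro k _
      rcases lt_or_ge k j with hk | hk
      · rw [h1 k hk, mul_zero]
      · have : i < k := lt_of_lt_of_le hlt hk
        rw [hLinvTri i k this, zero_mul]
    · -- j < i : use Qᵀ = A⁻¹ L, h2 and triangularity of L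
      have : (L⁻¹ * A) i j = (A⁻¹ * L) j i := by
        rw [← hQT]; rfl
      rw [this, Matrix.mul_apply]
      apply Finset.sum_eq_zero
      intro k _
      rcases lt_or_ge j k with hk | hk
      · rw [h2 k hk, zero_mul]
      · have : k < i := lt_of_le_of_lt hk hgt
        rw [hLtri k i this, mul_zero]
  -- first conjunct
  have hdiagval : (L⁻¹ * A) j j = L⁻¹ j j * A j j := by
    rw [Matrix.mul_apply]
    apply Finset.sum_eq_single j
    · intro k _ hk
      rcases lt_or_gt_of_ne hk with hlt | hgt
      · rw [h1 k hlt, mul_zero]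
      · rw [hLinvTri j k hgt, zero_mul]
    · intro h; exact absurd (Finset.mem_univ j) h
  -- second conjunct via QᵀQ = 1
  have hQTQ : (L⁻¹ * A)ᵀ * (L⁻¹ * A) = 1 := mul_eq_one_comm.1 hQorth
  have hnz : (L⁻¹ * A) j j ≠ 0 := by
    intro h0
    have : ((L⁻¹ * A)ᵀ * (L⁻¹ * A)) j j = 0 := by
      rw [Matrix.mul_apply]
      apply Finset.sum_eq_zero
      intro k _
      rcases eq_or_ne k j with rfl | hk
      · rw [Matrix.transpose_apply, h0, mul_zero]
      · rw [hzero k hk, mul_zero]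
    rw [hQTQ, Matrix.one_apply_eq] at this
    exact one_ne_zero this
  exact ⟨hdiagval, hnz, hzero⟩
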